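/- Let a₁,…,a_d, b be positive integers with each aᵢ coprime to b. Then b^d·S_{(a₁,…,a_d;b)}(t) = (−1)^d·(∑_{k₁,…,k_d=1}^{b−1, a₁k₁+⋯+a_dk_d ≡ −t (mod b)} k₁k₂⋯k_d − (1/b)·(b(b−1)/2)^d). -/

import Mathlib

noncomputable def xi (b : ℕ) : ℂ := Complex.exp (2 * Real.pi * Complex.I / b)

noncomputable def FDS (b : ℕ) {d : ℕ} (a : Fin d → ℕ) (s : Finset (Fin d)) (t : ℤ) : ℂ :=
  (b : ℂ)⁻¹ * ∑ j ∈ Finset.Ico 1 b,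
    xi b ^ ((j : ℤ) * t) / ∏ i ∈ s, (1 - xi b ^ ((j : ℤ) * (a i : ℤ)))

private lemma key_sum (ω : ℂ) : ∀ n : ℕ, (ω - 1) * ∑ k ∈ Finset.range n, (k : ℂ) * ω ^ k
    = ((n : ℂ) - 1) * ω ^ n - ∑ k ∈ Finset.range n, ω ^ k + 1
  | 0 => by simp
  | n + 1 => by
    rw [Finset.sum_range_succ, Finset.sum_range_succ (fun k => ω ^ k), mul_add, key_sum ω n]
    push_cast
    ring

private lemma inv_one_sub (b : ℕ) (hb : 0 < b) (ω : ℂ) (hωb : ω ^ b = 1) (hω1 : ω ≠ 1) :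
    (1 - ω)⁻¹ = -(b : ℂ)⁻¹ * ∑ k ∈ Finset.Ico 1 b, (k : ℂ) * ω ^ k := by
  have hbC : (b : ℂ) ≠ 0 := Nat.cast_ne_zero.mpr hb.ne'
  have hone : (1 : ℂ) - ω ≠ 0 := sub_ne_zero.mpr (Ne.symm hω1)
  have hgeom : ∑ k ∈ Finset.range b, ω ^ k = 0 := by
    rw [geom_sum_eq hω1, hωb]; simp
  have h := key_sum ω b
  rw [hωb, hgeom] at h
  have hIco : ∑ k ∈ Finset.Ico 1 b, (k : ℂ) * ω ^ k
      = ∑ k ∈ Finset.range b, (k : ℂ) * ω ^ k := by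
    rw [Finset.range_eq_Ico, Finset.sum_eq_sum_Ico_succ_bot hb]
    simp
  rw [hIco]
  field_simp
  linear_combination -h

theorem stmt3 (d b : ℕ) (hb : 0 < b) (a : Fin d → ℕ)
    (hpos : ∀ i, 0 < a i) (hcop : ∀ i, Nat.Coprime (a i) b) (t : ℤ) :
    (b : ℂ) ^ d * FDS b a Finset.univ t =
      (-1 : ℂ) ^ d *
        ((∑ k ∈ (Fintype.piFinset fun _ : Fin d => Finset.Ico 1 b).filter
            (fun k => (b : ℤ) ∣ (∑ i, (a i : ℤ) * (k i : ℤ)) + t),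
            ∏ i, (k i : ℂ)) -
          (b : ℂ)⁻¹ * ((b * (b - 1) / 2 : ℕ) : ℂ) ^ d) := by
  classical
  have hb' : b ≠ 0 := hb.ne'
  have hξ : IsPrimitiveRoot (xi b) b := Complex.isPrimitiveRoot_exp b hb'
  have hξ0 : xi b ≠ 0 := Complex.exp_ne_zero _
  have hbC : (b : ℂ) ≠ 0 := Nat.cast_ne_zero.mpr hb'
  set ξ := xi b with hξdef
  set P := Fintype.piFinset fun _ : Fin d => Finset.Ico 1 b with hP
  -- orthogonality
  have orth : ∀ m : ℤ, ∑ j ∈ Finset.range b, ξ ^ ((j : ℤ) * m)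
      = if (b : ℤ) ∣ m then (b : ℂ) else 0 := by
    intro m
    have hrw : ∀ j : ℕ, ξ ^ ((j : ℤ) * m) = (ξ ^ m) ^ j := by
      intro j; rw [mul_comm, zpow_mul, zpow_natCast]
    simp only [hrw]
    by_cases hdvd : (b : ℤ) ∣ m
    · have h1 : ξ ^ m = 1 := (hξ.zpow_eq_one_iff_dvd m).mpr hdvd
      simp [h1, hdvd]
    · have h1 : ξ ^ m ≠ 1 := fun h => hdvd ((hξ.zpow_eq_one_iff_dvd m).mp h)
      have hpow : (ξ ^ m) ^ b = 1 := by
        rw [← zpow_natCast (ξ ^ m), ← zpow_mul, mul_comm, zpow_mul, zpow_natCast,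
          hξ.pow_eq_one, one_zpow]
      rw [geom_sum_eq h1, hpow]
      simp [hdvd]
  -- per-j expansion
  have step1 : ∀ j ∈ Finset.Ico 1 b,
      ξ ^ ((j : ℤ) * t) / ∏ i : Fin d, (1 - ξ ^ ((j : ℤ) * (a i : ℤ)))
      = (-1 : ℂ) ^ d * ((b : ℂ)⁻¹) ^ d *
          ∑ k ∈ P, (∏ i, (k i : ℂ)) * ξ ^ ((j : ℤ) * ((∑ i, (a i : ℤ) * (k i : ℤ)) + t)) := by
    intro j hj
    rw [Finset.mem_Ico] at hj
    have hji : ∀ i : Fin d, ξ ^ ((j : ℤ) * (a i : ℤ)) = ξ ^ (j * a i) := by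
      intro i
      rw [← zpow_natCast ξ (j * a i)]
      push_cast
      ring_nf
    have hinv : ∀ i : Fin d, (1 - ξ ^ ((j : ℤ) * (a i : ℤ)))⁻¹
        = -(b : ℂ)⁻¹ * ∑ k ∈ Finset.Ico 1 b, (k : ℂ) * (ξ ^ (j * a i)) ^ k := by
      intro i
      rw [hji i]
      refine inv_one_sub b hb _ ?_ ?_
      · rw [← pow_mul, mul_comm (j * a i) b, pow_mul, hξ.pow_eq_one, one_pow]
      · intro h1
        have hdvd := (hξ.pow_eq_one_iff_dvd _).mp h1
        have := (Nat.Coprime.dvd_of_dvd_mul_right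
          (Nat.Coprime.symm (hcop i)) hdvd)
        have := Nat.le_of_dvd (by omega) this
        omega
    have perk : ∀ k ∈ P, ξ ^ ((j : ℤ) * t) * ∏ i, ((k i : ℂ) * (ξ ^ (j * a i)) ^ (k i))
        = (∏ i, (k i : ℂ)) * ξ ^ ((j : ℤ) * ((∑ i, (a i : ℤ) * (k i : ℤ)) + t)) := by
      intro k _
      rw [Finset.prod_mul_distrib]
      have h1 : ∏ i, (ξ ^ (j * a i)) ^ (k i) = ξ ^ (∑ i, j * a i * k i) := by
        rw [← Finset.prod_pow_eq_pow_sum]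
        exact Finset.prod_congr rfl fun i _ => (pow_mul ξ (j * a i) (k i)).symm
      rw [h1, ← zpow_natCast ξ (∑ i, j * a i * k i), mul_left_comm, ← zpow_add₀ hξ0]
      congr 1
      push_cast
      rw [mul_add, Finset.mul_sum, add_comm]
      simp [mul_assoc]
    have hsum : ξ ^ ((j : ℤ) * t) * ∑ k ∈ P, ∏ i, ((k i : ℂ) * (ξ ^ (j * a i)) ^ (k i))
        = ∑ k ∈ P, (∏ i, (k i : ℂ)) * ξ ^ ((j : ℤ) * ((∑ i, (a i : ℤ) * (k i : ℤ)) + t)) := by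
      rw [Finset.mul_sum]
      exact Finset.sum_congr rfl perk
    rw [div_eq_mul_inv, ← Finset.prod_inv_distrib,
      Finset.prod_congr rfl fun i _ => hinv i,
      Finset.prod_mul_distrib, Finset.prod_const, Finset.card_univ, Fintype.card_fin,
      Finset.prod_univ_sum, ← hP, mul_left_comm, hsum, neg_pow]
  -- sum over j in Ico 1 b of xi^(j*m)
  have hIcoSum : ∀ m : ℤ, ∑ j ∈ Finset.Ico 1 b, ξ ^ ((j : ℤ) * m)
      = (if (b : ℤ) ∣ m then (b : ℂ) else 0) - 1 := by
    intro m
    have h0 := orth m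
    rw [Finset.range_eq_Ico, Finset.sum_eq_sum_Ico_succ_bot hb] at h0
    simp only [Nat.cast_zero, zero_mul, zpow_zero] at h0
    linear_combination h0
  have main : ∑ j ∈ Finset.Ico 1 b, ∑ k ∈ P,
        (∏ i, (k i : ℂ)) * ξ ^ ((j : ℤ) * ((∑ i, (a i : ℤ) * (k i : ℤ)) + t))
      = ∑ k ∈ P, (∏ i, (k i : ℂ)) *
          ((if (b : ℤ) ∣ ((∑ i, (a i : ℤ) * (k i : ℤ)) + t) then (b : ℂ) else 0) - 1) := by
    rw [Finset.sum_comm]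
    exact Finset.sum_congr rfl fun k _ => by rw [← Finset.mul_sum, hIcoSum]
  have hGauss : ∑ k ∈ P, ∏ i, (k i : ℂ) = ((b * (b - 1) / 2 : ℕ) : ℂ) ^ d := by
    have hn : ∑ k ∈ Finset.Ico 1 b, k = b * (b - 1) / 2 := by
      have h2 : ∑ k ∈ Finset.range b, k = ∑ k ∈ Finset.Ico 1 b, k := by
        rw [Finset.range_eq_Ico, Finset.sum_eq_sum_Ico_succ_bot hb]
        norm_num
      rw [← h2, Finset.sum_range_id]
    have hc : ∑ k ∈ Finset.Ico 1 b, (k : ℂ) = ((b * (b - 1) / 2 : ℕ) : ℂ) := by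
      rw [← hn]
      push_cast
      rfl
    rw [hP, ← Finset.prod_univ_sum]
    simp [hc]
  have hfilter : ∑ k ∈ P.filter (fun k => (b : ℤ) ∣ (∑ i, (a i : ℤ) * (k i : ℤ)) + t),
        ∏ i, (k i : ℂ)
      = ∑ k ∈ P, (∏ i, (k i : ℂ)) *
          (if (b : ℤ) ∣ (∑ i, (a i : ℤ) * (k i : ℤ)) + t then (1 : ℂ) else 0) := by
    rw [Finset.sum_filter]
    exact Finset.sum_congr rfl fun k _ => by split <;> simp
  have hT : ∑ k ∈ P, (∏ i, (k i : ℂ)) *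
        ((if (b : ℤ) ∣ ((∑ i, (a i : ℤ) * (k i : ℤ)) + t) then (b : ℂ) else 0) - 1)
      = (b : ℂ) * (∑ k ∈ P.filter (fun k => (b : ℤ) ∣ (∑ i, (a i : ℤ) * (k i : ℤ)) + t),
          ∏ i, (k i : ℂ)) - ∑ k ∈ P, ∏ i, (k i : ℂ) := by
    rw [hfilter, Finset.mul_sum, ← Finset.sum_sub_distrib]
    refine Finset.sum_congr rfl fun k _ => ?_
    split <;> ring
  unfold FDS
  rw [← hξdef, Finset.sum_congr rfl step1, ← Finset.mul_sum, main, hT, hGauss]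
  have hbd : (b : ℂ) ^ d * ((b : ℂ)⁻¹) ^ d = 1 := by
    rw [← mul_pow, mul_inv_cancel₀ hbC, one_pow]
  generalize hF : (∑ k ∈ P.filter (fun k => (b : ℤ) ∣ (∑ i, (a i : ℤ) * (k i : ℤ)) + t),
      ∏ i, (k i : ℂ)) = F
  linear_combination (-1 : ℂ) ^ d * (b : ℂ)⁻¹ * ((b : ℂ) * F - ((b * (b - 1) / 2 : ℕ) : ℂ) ^ d) * hbd
    + (-1 : ℂ) ^ d * F * mul_inv_cancel₀ hbC
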